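/- Let b ≥ 3 be odd and a coprime to b with 1 ≤ a ≤ (b−1)/2. Define c_j = mod*(a·2^j, b) for j ≥ 1 (the modified modular doubling sequence). Then the sequence (c_j) is purely periodic with primitive period length k(b), the least k ≥ 1 with 2^k ≡ ±1 (mod b), and this length is independent of a. -/

import Mathlib

/-- The modified residue `mod*(a, b)`: `a mod b` if `a mod b ≤ b/2`, else `b − (a mod b)`. -/
def modStar (b : ℕ) (a : ℤ) : ℤ :=
  if a % (b : ℤ) ≤ (b : ℤ) / 2 then a % (b : ℤ) else (b : ℤ) - a % (b : ℤ)

lemma modStar_congr (b : ℕ) {x y : ℤ} (h : x % (b:ℤ) = y % (b:ℤ)) :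
    modStar b x = modStar b y := by
  unfold modStar; rw [h]

lemma neg_emod_eq (b : ℕ) (hb : 0 < b) {y : ℤ} (hy : y % (b:ℤ) ≠ 0) :
    (-y) % (b:ℤ) = (b:ℤ) - y % (b:ℤ) := by
  have h1 : 0 ≤ y % (b:ℤ) := Int.emod_nonneg y (by exact_mod_cast hb.ne')
  have h2 : y % (b:ℤ) < b := Int.emod_lt_of_pos y (by exact_mod_cast hb)
  have : (-y) % (b:ℤ) = ((b:ℤ) - y % (b:ℤ)) % (b:ℤ) := by
    rw [Int.neg_emod_eq_sub_emod, Int.sub_emod, Int.sub_emod (b:ℤ) (y % (b:ℤ)),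
      Int.emod_emod_of_dvd _ dvd_rfl]
  rw [this, Int.emod_eq_of_lt (by omega) (by omega)]

lemma modStar_neg (b : ℕ) (hb : 0 < b) (x : ℤ) : modStar b (-x) = modStar b x := by
  by_cases hx : x % (b:ℤ) = 0
  · have h0 : (-x) % (b:ℤ) = 0 :=
      Int.emod_eq_zero_of_dvd ((dvd_neg).mpr (Int.dvd_of_emod_eq_zero hx))
    unfold modStar; rw [hx, h0]
  · have h1 : 0 ≤ x % (b:ℤ) := Int.emod_nonneg x (by exact_mod_cast hb.ne')
    have h2 : x % (b:ℤ) < b := Int.emod_lt_of_pos x (by exact_mod_cast hb)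
    unfold modStar
    rw [neg_emod_eq b hb hx]
    split_ifs <;> omega

lemma modStar_eq_iff (b : ℕ) [NeZero b] (x y : ℤ) :
    modStar b x = modStar b y ↔ ((x : ZMod b) = (y : ZMod b) ∨ (x : ZMod b) = -(y : ZMod b)) := by
  have hb : 0 < b := Nat.pos_of_ne_zero (NeZero.ne b)
  have hx1 : 0 ≤ x % (b:ℤ) := Int.emod_nonneg x (by exact_mod_cast hb.ne')
  have hx2 : x % (b:ℤ) < b := Int.emod_lt_of_pos x (by exact_mod_cast hb)
  have hy1 : 0 ≤ y % (b:ℤ) := Int.emod_nonneg y (by exact_mod_cast hb.ne')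
  have hy2 : y % (b:ℤ) < b := Int.emod_lt_of_pos y (by exact_mod_cast hb)
  constructor
  · intro h
    have key : x % (b:ℤ) = y % (b:ℤ) ∨ x % (b:ℤ) + y % (b:ℤ) = (b:ℤ) := by
      unfold modStar at h; split_ifs at h <;> omega
    rcases key with h1 | h1
    · left
      rw [ZMod.intCast_eq_intCast_iff]
      exact h1
    · right
      rw [← Int.cast_neg, ZMod.intCast_eq_intCast_iff]
      show x % (b:ℤ) = (-y) % (b:ℤ)
      have hy0 : y % (b:ℤ) ≠ 0 := by omega
      rw [neg_emod_eq b hb hy0]; omega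
  · intro h
    rcases h with h1 | h1
    · exact modStar_congr b ((ZMod.intCast_eq_intCast_iff _ _ _).mp h1)
    · rw [← Int.cast_neg, ZMod.intCast_eq_intCast_iff] at h1
      rw [modStar_congr b h1, modStar_neg b hb]

/-- For odd `b ≥ 3` and `a` coprime to `b` with `1 ≤ a ≤ (b−1)/2`, the modified
modular doubling sequence `c j = mod*(a·2^j, b)` (for `j ≥ 1`) is purely periodic
with primitive period length the quasi-order `k(b)` (least `k ≥ 1` with
`2 ^ k ≡ ±1 (mod b)`), independently of `a`. -/
theorem mds_periodic (b : ℕ) (hb : 3 ≤ b) (hodd : Odd b)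
    (a : ℤ) (ha : Int.gcd a b = 1) (ha1 : 1 ≤ a) (ha2 : a ≤ ((b : ℤ) - 1) / 2)
    (K : ℕ)
    (hK : IsLeast {k : ℕ | 1 ≤ k ∧ ((2 : ZMod b) ^ k = 1 ∨ (2 : ZMod b) ^ k = -1)} K) :
    IsLeast {m : ℕ | 0 < m ∧ ∀ j : ℕ, 1 ≤ j →
      modStar b (a * 2 ^ (j + m)) = modStar b (a * 2 ^ j)} K := by
  haveI : NeZero b := ⟨by omega⟩
  have hu2 : IsUnit (2 : ZMod b) := by
    have hc : Nat.Coprime 2 b := (Nat.prime_two.coprime_iff_not_dvd).mpr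
      (fun hd => (Nat.not_even_iff_odd.mpr hodd) (even_iff_two_dvd.mpr hd))
    have := (ZMod.isUnit_iff_coprime 2 b).mpr hc
    simpa using this
  have hua : IsUnit (a : ZMod b) := by
    have h1 : IsCoprime a (b : ℤ) := Int.isCoprime_iff_gcd_eq_one.mpr ha
    have h2 := h1.map (Int.castRingHom (ZMod b))
    rw [map_natCast, ZMod.natCast_self] at h2
    have h4 := isCoprime_zero_right.mp h2
    simpa using h4
  constructor
  · refine ⟨hK.1.1, fun j hj => ?_⟩
    rw [modStar_eq_iff]
    rcases hK.1.2 with h1 | h1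
    · left; push_cast; rw [pow_add, h1, mul_one]
    · right; push_cast; rw [pow_add, h1]; ring
  · intro m hm
    have h := hm.2 1 le_rfl
    rw [modStar_eq_iff] at h
    have key : (2 : ZMod b) ^ m = 1 ∨ (2 : ZMod b) ^ m = -1 := by
      rcases h with h1 | h1
      · left
        push_cast at h1
        rw [pow_add, pow_one] at h1
        have h2 : ((a : ZMod b) * 2) * 2 ^ m = ((a : ZMod b) * 2) * 1 := by
          rw [mul_one]; linear_combination h1
        exact (hua.mul hu2).mul_left_cancel h2
      · right
        push_cast at h1
        rw [pow_add, pow_one] at h1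
        have h2 : ((a : ZMod b) * 2) * 2 ^ m = ((a : ZMod b) * 2) * (-1) := by
          linear_combination h1
        exact (hua.mul hu2).mul_left_cancel h2
    exact hK.2 ⟨hm.1, key⟩
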